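/- If a topological space X with topology τ is connected and τ* is a connected expansion of τ, then for any set A that is τ*-open but not τ-open, the simple expansion τ ∨ {A} is also connected. Hence τ is maximal connected if and only if it has no connected strict simple expansion. -/
import Mathlib


/-- The simple expansion `τ ∨ {A}`: the topology generated by the open sets of `τ`
together with the set `A`. -/
def simpleExpansion {X : Type*} (t : TopologicalSpace X) (A : Set X) : TopologicalSpace X :=
  TopologicalSpace.generateFrom (insert A {U | t.IsOpen U})

/-- A topology is maximal connected if it is connected and no strictly finer topology
is connected.  (In Mathlib's order on topologies, `s < t` means `s` is strictly finer.) -/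
def MaximalConnected {X : Type*} (t : TopologicalSpace X) : Prop :=
  @ConnectedSpace X t ∧ ∀ s : TopologicalSpace X, s < t → ¬ @ConnectedSpace X s

/-- Connectedness passes from a finer topology to a coarser one. -/
lemma connectedSpace_mono {X : Type*} {t s : TopologicalSpace X} (h : t ≤ s)
    (hc : @ConnectedSpace X t) : @ConnectedSpace X s := by
  haveI := hc
  exact @Function.Surjective.connectedSpace X X t hc s id Function.surjective_id
    (continuous_id_of_le h)

lemma simpleExpansion_le {X : Type*} (t : TopologicalSpace X) (A : Set X) :
    simpleExpansion t A ≤ t := by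
  intro U hU
  exact TopologicalSpace.GenerateOpen.basic U (Set.mem_insert_of_mem _ hU)

lemma isOpen_simpleExpansion {X : Type*} (t : TopologicalSpace X) (A : Set X) :
    (simpleExpansion t A).IsOpen A :=
  TopologicalSpace.GenerateOpen.basic A (Set.mem_insert _ _)

theorem stmt_0 {X : Type*} (t : TopologicalSpace X) (ht : @ConnectedSpace X t) :
    (∀ ts : TopologicalSpace X, ts ≤ t → @ConnectedSpace X ts →
      ∀ A : Set X, ts.IsOpen A → ¬ t.IsOpen A →
        @ConnectedSpace X (simpleExpansion t A)) ∧
    (MaximalConnected t ↔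
      ∀ A : Set X, ¬ t.IsOpen A → ¬ @ConnectedSpace X (simpleExpansion t A)) := by
  have part1 : ∀ ts : TopologicalSpace X, ts ≤ t → @ConnectedSpace X ts →
      ∀ A : Set X, ts.IsOpen A → ¬ t.IsOpen A →
        @ConnectedSpace X (simpleExpansion t A) := by
    intro ts hle hc A hA _
    have : ts ≤ simpleExpansion t A := by
      apply le_generateFrom (t := ts)
      rintro s (rfl | hs)
      · exact hA
      · exact hle s hs
    exact connectedSpace_mono this hc
  refine ⟨part1, ?_, ?_⟩
  · rintro ⟨_, hmax⟩ A hA hconn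
    refine hmax (simpleExpansion t A) ⟨simpleExpansion_le t A, ?_⟩ hconn
    intro hle
    exact hA (hle A (isOpen_simpleExpansion t A))
  · intro h
    refine ⟨ht, fun s hs hsc => ?_⟩
    obtain ⟨A, hAs, hAt⟩ : ∃ A : Set X, s.IsOpen A ∧ ¬ t.IsOpen A := by
      by_contra hcon
      push_neg at hcon
      exact hs.ne (le_antisymm hs.le (fun U hU => hcon U hU))
    exact h A hAt (part1 s hs.le hsc A hAs hAt)
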